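/- arXiv:2203.05432 — 2 statements merged into one kernel-verified Lean document; each statement's English description precedes it below -/
import Mathlib

section
/- Let n and k be integers with k ≥ 1 and n > k+1. Then S_{n+1,k+1}(0)/S_{n,k+1}(0) = ((n+1)(n-k)/(n(n+k+1))) · ((n+k)(n+k-2)⋯(n-k+2))² / ((n+k-1)(n+k-3)⋯(n-k+1))², where (n+k)(n+k-2)⋯(n-k+2) = ∏_{j=1}^{k} (n+k+2-2j) and (n+k-1)(n+k-3)⋯(n-k+1) = ∏_{j=1}^{k} (n+k+1-2j). -/
open Polynomial Finset

/-- The odd double factorial `(2k-1)!! = 1·3·5⋯(2k-1)`. -/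
noncomputable def oddDoubleFac (k : ℕ) : ℝ := ∏ j ∈ Finset.range k, (2 * (j : ℝ) + 1)

/-- The even double factorial `(2k)!! = 2·4⋯(2k)`. -/
noncomputable def evenDoubleFac (k : ℕ) : ℝ := ∏ j ∈ Finset.range k, (2 * (j : ℝ) + 2)

/-- `S_{n,k}(x) = 1 + Σ_{m=1}^{k-1} ((2m-1)!!/(2m)!!) (k-m)_{2m} (1-x²)^{-m} ∏_{j=1}^m (n²-j²)⁻¹`. -/
noncomputable def S (n k : ℕ) (x : ℝ) : ℝ :=
  1 + ∑ m ∈ Finset.Icc 1 (k - 1),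
    (oddDoubleFac m / evenDoubleFac m) *
      ((ascPochhammer ℝ (2 * m)).eval ((k : ℝ) - (m : ℝ))) *
      ((1 - x ^ 2) ^ m)⁻¹ *
      ∏ j ∈ Finset.Icc 1 m, ((n : ℝ) ^ 2 - (j : ℝ) ^ 2)⁻¹


noncomputable def Cc (m : ℕ) : ℝ := oddDoubleFac m / evenDoubleFac m
noncomputable def Pp (x : ℝ) (m k : ℕ) : ℝ := ∏ j ∈ Finset.Icc (m+1) k, (x^2 - (j:ℝ)^2)
noncomputable def tt (x : ℝ) (k m : ℕ) : ℝ :=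
  Cc m * (ascPochhammer ℝ (2*m)).eval ((k:ℝ)+1-(m:ℝ)) * Pp x m k
noncomputable def AA (x : ℝ) (k : ℕ) : ℝ := ∑ m ∈ Finset.range (k+1), tt x k m
noncomputable def GG (x : ℝ) (k m : ℕ) : ℝ :=
  -2*(2*(k:ℝ)+3)*(x^2-((k:ℝ)+1)^2)*(m:ℝ)*(x^2-(m:ℝ)^2)*Cc m *
    (ascPochhammer ℝ (2*m-2)).eval ((k:ℝ)+3-(m:ℝ)) * Pp x m k
noncomputable def DD (x : ℝ) (k : ℕ) : ℝ := ∏ j ∈ Finset.Icc 1 k, (x + (k:ℝ) + 1 - 2*(j:ℝ))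

lemma odf_succ (m : ℕ) : oddDoubleFac (m+1) = oddDoubleFac m * (2*(m:ℝ)+1) :=
  Finset.prod_range_succ _ _

lemma edf_succ (m : ℕ) : evenDoubleFac (m+1) = evenDoubleFac m * (2*(m:ℝ)+2) :=
  Finset.prod_range_succ _ _

lemma edf_pos (m : ℕ) : 0 < evenDoubleFac m := by
  apply Finset.prod_pos; intro i _; positivity

lemma Cc_succ (m : ℕ) : Cc (m+1) = Cc m * ((2*(m:ℝ)+1)/(2*(m:ℝ)+2)) := by
  unfold Cc
  rw [odf_succ, edf_succ]
  have h1 : evenDoubleFac m ≠ 0 := (edf_pos m).ne'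
  have h2 : (2*(m:ℝ)+2) ≠ 0 := by positivity
  field_simp

lemma Cc_zero : Cc 0 = 1 := by simp [Cc, oddDoubleFac, evenDoubleFac]
lemma Cc_one : Cc 1 = 1/2 := by
  norm_num [Cc, oddDoubleFac, evenDoubleFac]

-- Pochhammer lemmas
lemma pochR (N : ℕ) (a : ℝ) :
    (ascPochhammer ℝ (N+2)).eval a = (ascPochhammer ℝ N).eval a * (a+N) * (a+N+1) := by
  rw [ascPochhammer_succ_eval, ascPochhammer_succ_eval]; push_cast; ring

lemma pochL_eval (N : ℕ) (a : ℝ) :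
    (ascPochhammer ℝ (N+1)).eval a = a * (ascPochhammer ℝ N).eval (a+1) := by
  rw [ascPochhammer_succ_left]
  simp [eval_comp]

lemma pochL (N : ℕ) (a : ℝ) :
    (ascPochhammer ℝ (N+2)).eval a = a * (a+1) * (ascPochhammer ℝ N).eval (a+2) := by
  rw [show N+2 = (N+1)+1 from rfl, pochL_eval, pochL_eval]; ring_nf

lemma pochM (N : ℕ) (a : ℝ) :
    (ascPochhammer ℝ (N+2)).eval a = a * (ascPochhammer ℝ N).eval (a+1) * (a+(N:ℝ)+1) := by
  rw [show N+2 = (N+1)+1 from rfl, ascPochhammer_succ_eval, pochL_eval]; push_cast; ring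

-- Pp lemmas
lemma Pp_diag (x : ℝ) (k : ℕ) : Pp x k k = 1 := by
  simp [Pp]

lemma Pp_top (x : ℝ) (m k : ℕ) (h : m ≤ k) :
    Pp x m (k+1) = Pp x m k * (x^2 - ((k:ℝ)+1)^2) := by
  unfold Pp
  rw [Finset.prod_Icc_succ_top (by omega)]
  push_cast; ring

lemma Pp_bot (x : ℝ) (m k : ℕ) (h : m < k) :
    Pp x m k = (x^2 - ((m:ℝ)+1)^2) * Pp x (m+1) k := by
  unfold Pp
  rw [← Finset.Ico_add_one_right_eq_Icc, Finset.prod_eq_prod_Ico_succ_bot (by omega), Finset.Ico_add_one_right_eq_Icc]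
  push_cast; ring

lemma GG_zero (x : ℝ) (k : ℕ) : GG x k 0 = 0 := by simp [GG]

lemma cert (x : ℝ) (k m : ℕ) (hm : m < k) :
    tt x (k+2) m - (x^2-((k:ℝ)+1)^2)^2 * tt x k m = GG x k (m+1) - GG x k m := by
  match m with
  | 0 =>
    unfold tt GG
    rw [Pp_top x 0 (k+1) (by omega), Pp_top x 0 k (by omega),
        Pp_bot x 0 k (by omega)]
    simp only [Nat.mul_zero, Nat.cast_zero, ascPochhammer_zero, eval_one, Cc_zero, Cc_one]
    norm_num
    rw [Cc_one]
    push_cast; ring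
  | (m'+1) =>
    unfold tt GG
    have e4 : 2*(m'+1) - 2 = 2*m' := by omega
    have e3 : 2*(m'+1+1) - 2 = 2*m'+2 := by omega
    have e2 : 2*(m'+1) = 2*m'+2 := by omega
    rw [e4, e3, e2]
    -- eval points
    have p1 : ((k:ℝ)+2) + 1 - ((m':ℝ)+1) = ((k:ℝ)+2-(m':ℝ)) := by ring
    have hEa : (ascPochhammer ℝ (2*m'+2)).eval (((k+2:ℕ):ℝ)+1-((m'+1:ℕ):ℝ))
        = (ascPochhammer ℝ (2*m')).eval ((k:ℝ)+2-(m':ℝ)) * ((k:ℝ)+2+(m':ℝ)) * ((k:ℝ)+3+(m':ℝ)) := by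
      push_cast
      rw [show (k:ℝ)+2+1-((m':ℝ)+1) = (k:ℝ)+2-(m':ℝ) by ring, pochR]
      push_cast; ring
    have hEb : (ascPochhammer ℝ (2*m'+2)).eval (((k:ℕ):ℝ)+1-((m'+1:ℕ):ℝ))
        = ((k:ℝ)-(m':ℝ)) * ((k:ℝ)+1-(m':ℝ)) * (ascPochhammer ℝ (2*m')).eval ((k:ℝ)+2-(m':ℝ)) := by
      push_cast
      rw [show (k:ℝ)+1-((m':ℝ)+1) = (k:ℝ)-(m':ℝ) by ring, pochL]
      ring_nf
    have hEc : (ascPochhammer ℝ (2*m'+2)).eval (((k:ℕ):ℝ)+3-((m'+2:ℕ):ℝ))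
        = ((k:ℝ)+1-(m':ℝ)) * (ascPochhammer ℝ (2*m')).eval ((k:ℝ)+2-(m':ℝ)) * ((k:ℝ)+2+(m':ℝ)) := by
      push_cast
      rw [show (k:ℝ)+3-((m':ℝ)+2) = (k:ℝ)+1-(m':ℝ) by ring, pochM]
      push_cast; ring_nf
    rw [hEa, hEb, hEc]
    rw [Pp_top x (m'+1) (k+1) (by omega), Pp_top x (m'+1) k (by omega),
        Pp_bot x (m'+1) k (by omega), Cc_succ (m'+1)]
    push_cast
    rw [show (k:ℝ)+3-((m':ℝ)+1) = (k:ℝ)+2-(m':ℝ) by ring]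
    have hden : (2*((m':ℝ)+1)+2) ≠ 0 := by positivity
    field_simp
    ring

lemma boundary (x : ℝ) (K : ℕ) :
    GG x (K+1) (K+1) + (tt x (K+1+2) (K+1) - (x^2-((K:ℝ)+2)^2)^2 * tt x (K+1) (K+1))
      + tt x (K+1+2) (K+2) + tt x (K+1+2) (K+3) = 0 := by
  unfold tt GG
  have e1 : 2*(K+1) - 2 = 2*K := by omega
  have e2 : 2*(K+1) = 2*K+2 := by omega
  have e3 : 2*(K+2) = (2*K+2)+2 := by omega
  have e4 : 2*(K+3) = (2*K+4)+2 := by omega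
  rw [e1, e2, e3, e4]
  set E := (ascPochhammer ℝ (2*K)).eval (3:ℝ) with hE
  have h1 : (ascPochhammer ℝ (2*K)).eval (((K+1:ℕ):ℝ)+3-((K+1:ℕ):ℝ)) = E := by
    push_cast; norm_num; exact hE.symm
  have h2 : (ascPochhammer ℝ (2*K+2)).eval (((K+1+2:ℕ):ℝ)+1-((K+1:ℕ):ℝ))
      = E * (3+2*(K:ℝ)) * (4+2*(K:ℝ)) := by
    push_cast
    rw [show (K:ℝ)+1+2+1-((K:ℝ)+1) = 3 by ring, pochR]
    push_cast; ring
  have h3 : (ascPochhammer ℝ (2*K+2)).eval (((K+1:ℕ):ℝ)+1-((K+1:ℕ):ℝ)) = 2*E := by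
    push_cast
    rw [show (K:ℝ)+1+1-((K:ℝ)+1) = 1 by ring, pochL]
    norm_num
    exact hE.symm
  have h4 : (ascPochhammer ℝ ((2*K+2)+2)).eval (((K+1+2:ℕ):ℝ)+1-((K+2:ℕ):ℝ))
      = 2 * (E * (3+2*(K:ℝ)) * (4+2*(K:ℝ))) * (5+2*(K:ℝ)) := by
    push_cast
    rw [show (K:ℝ)+1+2+1-((K:ℝ)+2) = 2 by ring, pochM, pochR]
    push_cast; norm_num; ring
  have h5 : (ascPochhammer ℝ ((2*K+4)+2)).eval (((K+1+2:ℕ):ℝ)+1-((K+3:ℕ):ℝ))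
      = 2 * (E * (3+2*(K:ℝ)) * (4+2*(K:ℝ)) * (5+2*(K:ℝ)) * (6+2*(K:ℝ))) := by
    push_cast
    rw [show (K:ℝ)+1+2+1-((K:ℝ)+3) = 1 by ring, pochL,
        show (2*K+4 = (2*K+2)+2) from rfl, pochR, pochR]
    push_cast; norm_num; ring
  rw [h1, h2, h3, h4, h5, Pp_diag, Pp_diag,
      Pp_top x (K+1) (K+2) (by omega), Pp_top x (K+1) (K+1) (by omega), Pp_diag,
      Pp_top x (K+2) (K+2) (by omega), Pp_diag,
      show K+3 = (K+2)+1 from rfl, Cc_succ (K+2), Cc_succ (K+1)]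
  push_cast
  have hd1 : (2*((K:ℝ)+1)+2) ≠ 0 := by positivity
  have hd2 : (2*((K:ℝ)+2)+2) ≠ 0 := by positivity
  field_simp
  ring

lemma Arec (x : ℝ) (K : ℕ) :
    AA x (K+1+2) = (x^2-((K:ℝ)+2)^2)^2 * AA x (K+1) := by
  set k := K+1 with hk
  have hsum : ∑ m ∈ Finset.range k, (tt x (k+2) m - (x^2-((k:ℝ)+1)^2)^2 * tt x k m)
      = GG x k k - GG x k 0 := by
    rw [← Finset.sum_range_sub (fun m => GG x k m) k]
    exact Finset.sum_congr rfl (fun m hm => cert x k m (Finset.mem_range.mp hm))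
  have hA2 : AA x (k+2) = (∑ m ∈ Finset.range k, tt x (k+2) m)
      + tt x (k+2) k + tt x (k+2) (k+1) + tt x (k+2) (k+2) := by
    unfold AA
    rw [show k+2+1 = ((k+1)+1)+1 from rfl, Finset.sum_range_succ, Finset.sum_range_succ,
        show (k+1) = k+1 from rfl, Finset.sum_range_succ]
  have hA : (x^2-((k:ℝ)+1)^2)^2 * AA x k
      = (∑ m ∈ Finset.range k, (x^2-((k:ℝ)+1)^2)^2 * tt x k m)
        + (x^2-((k:ℝ)+1)^2)^2 * tt x k k := by
    unfold AA
    rw [Finset.sum_range_succ, mul_add, Finset.mul_sum]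
  have hb := boundary x K
  have hg0 := GG_zero x k
  have hcast : ((k:ℝ)+1) = ((K:ℝ)+2) := by rw [hk]; push_cast; ring
  rw [hcast] at hsum hA
  have hKk : K+1+2 = k+2 := rfl
  rw [hKk, hA2]
  have hsplit : (∑ m ∈ Finset.range k, tt x (k+2) m)
      = (∑ m ∈ Finset.range k, (x^2-((K:ℝ)+2)^2)^2 * tt x k m) + (GG x k k - GG x k 0) := by
    rw [← hsum, ← Finset.sum_add_distrib]
    exact Finset.sum_congr rfl (fun m _ => by ring)
  rw [hsplit, hg0]
  have : tt x (k+2) (k+1) = tt x (K+1+2) (K+2) := rfl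
  linarith [hb, hA]

lemma prod_Icc_one (f : ℕ → ℝ) (k : ℕ) :
    ∏ j ∈ Finset.Icc 1 k, f j = ∏ i ∈ Finset.range k, f (1+i) := by
  rw [← Finset.Ico_add_one_right_eq_Icc, Finset.prod_Ico_eq_prod_range]
  norm_num

lemma DDrec (x : ℝ) (k : ℕ) :
    DD x (k+2) = (x + (k:ℝ) + 1) * (x - ((k:ℝ)+1)) * DD x k := by
  unfold DD
  rw [prod_Icc_one, prod_Icc_one, Finset.prod_range_succ', Finset.prod_range_succ]
  push_cast
  have : ∀ i ∈ Finset.range k, x + ((k:ℝ) + 2) + 1 - 2 * (1 + ((i:ℝ) + 1))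
      = x + (k:ℝ) + 1 - 2 * (1 + (i:ℝ)) := fun i _ => by ring
  rw [Finset.prod_congr rfl this]
  ring

lemma AA_zero (x : ℝ) : AA x 0 = DD x 0 ^ 2 := by
  simp [AA, DD, tt, Pp, Cc_zero]

lemma AA_one (x : ℝ) : AA x 1 = DD x 1 ^ 2 := by
  rw [AA, Finset.sum_range_succ, Finset.sum_range_succ, Finset.sum_range_zero]
  unfold tt DD
  rw [Cc_zero, Cc_one]
  norm_num [Pp, ascPochhammer_succ_eval]
  ring

lemma AA_two (x : ℝ) : AA x 2 = DD x 2 ^ 2 := by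
  rw [AA, Finset.sum_range_succ, Finset.sum_range_succ, Finset.sum_range_succ,
      Finset.sum_range_zero]
  unfold tt DD
  rw [Cc_zero, Cc_one, show (2:ℕ) = 1+1 from rfl, Cc_succ, Cc_one]
  norm_num [Pp, ascPochhammer_succ_eval]
  rw [show Finset.Icc 1 2 = {1, 2} from rfl]
  norm_num [Finset.prod_insert, Finset.prod_singleton]
  ring

lemma AA_eq (k : ℕ) : ∀ x : ℝ, AA x k = DD x k ^ 2 := by
  induction k using Nat.strong_induction_on with
  | _ k ih =>
    match k with
    | 0 => exact AA_zero
    | 1 => exact AA_one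
    | 2 => exact AA_two
    | (K+3) =>
      intro x
      have h1 : K+3 = (K+1)+2 := rfl
      rw [h1, Arec x K, DDrec x (K+1), ih (K+1) (by omega) x]
      push_cast
      ring

lemma Pp_split (x : ℝ) (m k : ℕ) (h : m ≤ k) : Pp x 0 k = Pp x 0 m * Pp x m k := by
  unfold Pp
  rw [show m+1 = Nat.succ m from rfl, show (0:ℕ)+1 = Nat.succ 0 from rfl,
      show (Finset.Icc (Nat.succ 0) k : Finset ℕ) = Finset.Ioc 0 k from Finset.Icc_add_one_left_eq_Ioc (a := 0) (b := k),
      show (Finset.Icc (Nat.succ 0) m : Finset ℕ) = Finset.Ioc 0 m from Finset.Icc_add_one_left_eq_Ioc (a := 0) (b := m),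
      show (Finset.Icc (Nat.succ m) k : Finset ℕ) = Finset.Ioc m k from Finset.Icc_add_one_left_eq_Ioc (a := m) (b := k),
      Finset.prod_Ioc_consecutive _ (Nat.zero_le m) h]

lemma S_eq (n k : ℕ) (h : ∀ j ∈ Finset.Icc 1 k, ((n:ℝ)^2 - (j:ℝ)^2) ≠ 0) :
    S n (k+1) 0 = AA (n:ℝ) k / Pp (n:ℝ) 0 k := by
  have hPm : ∀ m, m ≤ k → Pp (n:ℝ) 0 m ≠ 0 := by
    intro m hm
    refine Finset.prod_ne_zero_iff.mpr (fun j hj => ?_)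
    exact h j (Finset.mem_Icc.mpr ⟨(Finset.mem_Icc.mp hj).1, le_trans (Finset.mem_Icc.mp hj).2 hm⟩)
  have hPk : Pp (n:ℝ) 0 k ≠ 0 := hPm k le_rfl
  rw [eq_div_iff hPk]
  unfold S AA
  rw [show k+1-1 = k from rfl]
  have hsum : ∀ (g : ℕ → ℝ), ∑ m ∈ Finset.Icc 1 k, g m = ∑ i ∈ Finset.range k, g (1+i) :=
    fun g => by rw [← Finset.Ico_add_one_right_eq_Icc, Finset.sum_Ico_eq_sum_range]; norm_num
  rw [hsum, Finset.sum_range_succ' (fun m => tt (n:ℝ) k m) k]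
  rw [add_mul, Finset.sum_mul, one_mul]
  have h0 : tt (n:ℝ) k 0 = Pp (n:ℝ) 0 k := by
    simp [tt, Cc_zero]
  rw [h0, add_comm]
  congr 1
  refine Finset.sum_congr rfl (fun i hi => ?_)
  have hik : i+1 ≤ k := by have := Finset.mem_range.mp hi; omega
  rw [show 1+i = i+1 by omega, Pp_split (n:ℝ) (i+1) k hik]
  unfold tt Cc
  rw [Finset.prod_inv_distrib]
  have hPP : (∏ j ∈ Finset.Icc 1 (i+1), ((n:ℝ)^2 - (j:ℝ)^2)) = Pp (n:ℝ) 0 (i+1) := rfl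
  rw [hPP]
  have hinv : Pp (n:ℝ) 0 (i+1) ≠ 0 := hPm (i+1) hik
  have hcast : (((k+1:ℕ)):ℝ) - ((i+1:ℕ):ℝ) = ((k:ℝ)+1) - ((i+1:ℕ):ℝ) := by push_cast; ring
  rw [hcast]
  norm_num
  have key : ∀ (a b c : ℝ), b ≠ 0 → a * b⁻¹ * (b * c) = a * c := by
    intro a b c hb; field_simp
  exact key _ _ _ hinv

lemma DD_ne_zero (n k : ℕ) (h : k < n) : DD (n:ℝ) k ≠ 0 := by
  refine Finset.prod_ne_zero_iff.mpr (fun j hj => ?_)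
  have hj2 := (Finset.mem_Icc.mp hj).2
  have h1 : (j:ℝ) ≤ (k:ℝ) := by exact_mod_cast hj2
  have h2 : (k:ℝ) < (n:ℝ) := by exact_mod_cast h
  nlinarith

lemma Pp_nonzero (n k : ℕ) (h : k < n) : ∀ j ∈ Finset.Icc 1 k, ((n:ℝ)^2 - (j:ℝ)^2) ≠ 0 := by
  intro j hj
  have hj2 := (Finset.mem_Icc.mp hj).2
  have h1 : (j:ℝ) ≤ (k:ℝ) := by exact_mod_cast hj2
  have h2 : (k:ℝ) < (n:ℝ) := by exact_mod_cast h
  have h3 : (0:ℝ) ≤ (j:ℝ) := Nat.cast_nonneg j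
  nlinarith

lemma KP (n k K : ℕ) (hkK : k = K+1) (hn : k < n) :
    Pp (n:ℝ) 0 k * ((n:ℝ)*((n:ℝ)+(k:ℝ)+1)) = Pp ((n:ℝ)+1) 0 k * (((n:ℝ)+1)*((n:ℝ)-(k:ℝ))) := by
  have hsplit : ∀ x : ℝ, Pp x 0 k = (∏ i ∈ Finset.range k, (x-(1+(i:ℝ)))) *
      (∏ i ∈ Finset.range k, (x+(1+(i:ℝ)))) := by
    intro x
    unfold Pp
    rw [prod_Icc_one, ← Finset.prod_mul_distrib]
    exact Finset.prod_congr rfl (fun i _ => by push_cast; ring)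
  rw [hsplit, hsplit]
  subst hkK
  set g : ℕ → ℝ := fun i => (n:ℝ) - (i:ℝ) with hg
  set f : ℕ → ℝ := fun i => (n:ℝ) + 1 + (i:ℝ) with hf
  have hA1 : ∏ i ∈ Finset.range (K+1), ((n:ℝ)-(1+(i:ℝ))) = ∏ i ∈ Finset.range (K+1), g (i+1) :=
    Finset.prod_congr rfl (fun i _ => by simp [hg]; push_cast; ring)
  have hB1 : ∏ i ∈ Finset.range (K+1), (((n:ℝ)+1)-(1+(i:ℝ))) = ∏ i ∈ Finset.range (K+1), g i :=
    Finset.prod_congr rfl (fun i _ => by simp [hg]; push_cast; ring)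
  have hA2 : ∏ i ∈ Finset.range (K+1), ((n:ℝ)+(1+(i:ℝ))) = ∏ i ∈ Finset.range (K+1), f i :=
    Finset.prod_congr rfl (fun i _ => by simp [hf]; push_cast; ring)
  have hB2 : ∏ i ∈ Finset.range (K+1), (((n:ℝ)+1)+(1+(i:ℝ))) = ∏ i ∈ Finset.range (K+1), f (i+1) :=
    Finset.prod_congr rfl (fun i _ => by simp [hf]; push_cast; ring)
  rw [hA1, hB1, hA2, hB2]
  have e1 := Finset.prod_range_succ g (K+1)
  have e2 := Finset.prod_range_succ' g (K+1)
  have e3 := Finset.prod_range_succ f (K+1)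
  have e4 := Finset.prod_range_succ' f (K+1)
  rw [e2] at e1
  rw [e4] at e3
  simp only [hf, hg] at e1 e3 ⊢
  push_cast at e1 e3 ⊢
  linear_combination ((∏ i ∈ Finset.range (K+1), ((n:ℝ)+1+(i:ℝ))) * ((n:ℝ)+1+((K:ℝ)+1))) * e1
    - ((∏ i ∈ Finset.range (K+1), ((n:ℝ)-(i:ℝ))) * ((n:ℝ)-((K:ℝ)+1))) * e3


theorem stmt12 (n k : ℕ) (hk : 1 ≤ k) (hn : k + 1 < n) :
    S (n + 1) (k + 1) 0 / S n (k + 1) 0 =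
      ((n : ℝ) + 1) * ((n : ℝ) - (k : ℝ)) / ((n : ℝ) * ((n : ℝ) + (k : ℝ) + 1)) *
        ((∏ j ∈ Finset.Icc 1 k, ((n : ℝ) + (k : ℝ) + 2 - 2 * (j : ℝ))) ^ 2 /
          (∏ j ∈ Finset.Icc 1 k, ((n : ℝ) + (k : ℝ) + 1 - 2 * (j : ℝ))) ^ 2) := by
  have hn1 : k < n := by omega
  have hn2 : k < n+1 := by omega
  rw [S_eq n k (Pp_nonzero n k hn1), S_eq (n+1) k (Pp_nonzero (n+1) k hn2),
      AA_eq k ((n:ℝ)), AA_eq k (((n+1:ℕ):ℝ))]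
  have hc : ((n+1:ℕ):ℝ) = (n:ℝ)+1 := by push_cast; ring
  rw [hc]
  have hD1 : DD ((n:ℝ)+1) k = ∏ j ∈ Finset.Icc 1 k, ((n:ℝ)+(k:ℝ)+2-2*(j:ℝ)) := by
    unfold DD
    exact Finset.prod_congr rfl (fun j _ => by push_cast; ring)
  have hD0 : DD ((n:ℝ)) k = ∏ j ∈ Finset.Icc 1 k, ((n:ℝ)+(k:ℝ)+1-2*(j:ℝ)) := rfl
  rw [← hD1, ← hD0]
  have hP0 : Pp ((n:ℝ)) 0 k ≠ 0 :=
    Finset.prod_ne_zero_iff.mpr (fun j hj => Pp_nonzero n k hn1 j hj)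
  have hP1 : Pp ((n:ℝ)+1) 0 k ≠ 0 := by
    rw [← hc]
    exact Finset.prod_ne_zero_iff.mpr (fun j hj => Pp_nonzero (n+1) k hn2 j hj)
  have hDD0 : DD ((n:ℝ)) k ≠ 0 := DD_ne_zero n k hn1
  have hnn : (n:ℝ) ≠ 0 := Nat.cast_ne_zero.mpr (by omega)
  have hnk : (n:ℝ)+(k:ℝ)+1 ≠ 0 := by positivity
  have hKP := KP n k (k-1) (by omega) hn1
  field_simp
  linear_combination (DD ((n:ℝ)+1) k ^ 2) * hKP
end

section
/- Let n and k be integers with k ≥ 1 and n > k+1, and let ω = ω_{n,k} be the largest real zero of T_n^{(k+1)}. Then τ_{n,k} = -1 + Σ_{m=1}^{n-k} (-1)^{m+1} · binom(n-k, m) · (n+k)_m / (k+1/2)_m · ((1-ω)/2)^m, where (a)_m = a(a+1)⋯(a+m-1) is the Pochhammer symbol. -/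
open Polynomial Finset

lemma T_deg_coeff : ∀ j : ℕ, (Chebyshev.T ℝ (j:ℤ)).natDegree = j ∧ 0 < (Chebyshev.T ℝ (j:ℤ)).coeff j := by
  intro j
  induction j using Nat.strong_induction_on with
  | _ j ih =>
    match j with
    | 0 => simp [Chebyshev.T_zero]
    | 1 => simp [Chebyshev.T_one]
    | (j+2) =>
      obtain ⟨h1d, h1c⟩ := ih (j+1) (by omega)
      obtain ⟨h0d, h0c⟩ := ih j (by omega)
      have hT : Chebyshev.T ℝ ((j+2:ℕ):ℤ) = 2 * X * Chebyshev.T ℝ ((j+1:ℕ):ℤ) - Chebyshev.T ℝ (j:ℤ) := by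
        push_cast
        exact Chebyshev.T_add_two ℝ (j:ℤ)
      rw [hT]
      have hz : (Chebyshev.T ℝ (j:ℤ)).coeff (j+2) = 0 :=
        coeff_eq_zero_of_natDegree_lt (by omega)
      have hcoeff : (2 * X * Chebyshev.T ℝ ((j+1:ℕ):ℤ) - Chebyshev.T ℝ (j:ℤ)).coeff (j+2)
          = 2 * (Chebyshev.T ℝ ((j+1:ℕ):ℤ)).coeff (j+1) := by
        rw [coeff_sub, hz, sub_zero, mul_assoc, (map_ofNat C 2).symm,
          coeff_C_mul, coeff_X_mul]
      have hcpos : 0 < (2 * X * Chebyshev.T ℝ ((j+1:ℕ):ℤ) - Chebyshev.T ℝ (j:ℤ)).coeff (j+2) := by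
        rw [hcoeff]; positivity
      refine ⟨le_antisymm ?_ (le_natDegree_of_ne_zero hcpos.ne'), hcpos⟩
      refine (natDegree_sub_le _ _).trans ?_
      simp only [max_le_iff]
      refine ⟨natDegree_mul_le.trans ?_, by omega⟩
      have h2X : (2 * X : ℝ[X]).natDegree ≤ 1 := natDegree_mul_le.trans (by simp)
      omega

lemma dT_deg_coeff (n : ℕ) : ∀ j, j ≤ n →
    (derivative^[j] (Chebyshev.T ℝ (n:ℤ))).natDegree = n - j ∧
    0 < (derivative^[j] (Chebyshev.T ℝ (n:ℤ))).coeff (n-j) := by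
  intro j
  induction j with
  | zero => intro _; simpa using T_deg_coeff n
  | succ j ih =>
    intro hj
    obtain ⟨hd, hc⟩ := ih (by omega)
    set p := derivative^[j] (Chebyshev.T ℝ (n:ℤ)) with hp
    have hder : derivative^[j+1] (Chebyshev.T ℝ (n:ℤ)) = derivative p := by
      rw [Function.iterate_succ_apply']
    rw [hder]
    have hnj : n - j = (n - (j+1)) + 1 := by omega
    have hcoeff : (derivative p).coeff (n - (j+1)) = p.coeff (n-j) * (n-j : ℕ) := by
      rw [coeff_derivative, hnj]
      push_cast
      ring
    have hcpos : 0 < (derivative p).coeff (n - (j+1)) := by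
      rw [hcoeff]
      have : (0:ℝ) < (n - j : ℕ) := by
        have : 0 < n - j := by omega
        exact_mod_cast this
      positivity
    refine ⟨le_antisymm ?_ (le_natDegree_of_ne_zero hcpos.ne'), hcpos⟩
    have := natDegree_derivative_le p
    omega

lemma cheb_ode (n : ℤ) : (1 - X^2 : ℝ[X]) * derivative (derivative (Chebyshev.T ℝ n)) =
    X * derivative (Chebyshev.T ℝ n) - (n:ℝ[X])^2 * Chebyshev.T ℝ n := by
  have h1 : derivative (Chebyshev.T ℝ n) = n * Chebyshev.U ℝ (n-1) := Chebyshev.T_derivative_eq_U n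
  have h2 := Chebyshev.add_one_mul_T_eq_poly_in_U (R := ℝ) (n-1)
  rw [sub_add_cancel] at h2
  have h3 : derivative (derivative (Chebyshev.T ℝ n)) = (n:ℝ[X]) * derivative (Chebyshev.U ℝ (n-1)) := by
    rw [h1, derivative_mul]; simp
  rw [h3, h1]
  push_cast at h2 ⊢
  linear_combination (n:ℝ[X]) * h2

lemma cheb_ode_iter (n : ℤ) : ∀ m : ℕ,
    (1 - X^2 : ℝ[X]) * derivative^[m+2] (Chebyshev.T ℝ n)
      - (2*(m:ℝ[X])+1) * X * derivative^[m+1] (Chebyshev.T ℝ n)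
      + ((n:ℝ[X])^2 - (m:ℝ[X])^2) * derivative^[m] (Chebyshev.T ℝ n) = 0 := by
  intro m
  induction m with
  | zero =>
    have h := cheb_ode n
    simp only [Function.iterate_succ_apply', Function.iterate_zero_apply, Function.iterate_one]
    push_cast
    linear_combination h
  | succ m ih =>
    have h := congrArg derivative ih
    simp only [derivative_add, derivative_sub, derivative_mul, derivative_one, derivative_X,
      derivative_X_pow, derivative_pow, derivative_natCast, derivative_intCast, derivative_ofNat, map_ofNat, map_natCast, Nat.cast_ofNat,
      derivative_zero] at h
    simp only [Function.iterate_succ_apply'] at h ⊢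
    push_cast
    push_cast at h
    linear_combination h

lemma t_rec (n : ℤ) (m : ℕ) :
    (2*(m:ℝ)+1) * (derivative^[m+1] (Chebyshev.T ℝ n)).eval 1
      = ((n:ℝ)^2 - (m:ℝ)^2) * (derivative^[m] (Chebyshev.T ℝ n)).eval 1 := by
  have h := congrArg (Polynomial.eval (1:ℝ)) (cheb_ode_iter n m)
  simp only [eval_add, eval_sub, eval_mul, eval_one, eval_X, eval_pow, eval_natCast,
    eval_intCast, eval_ofNat, eval_zero] at h
  nlinarith [h]

lemma T_eval_one (n : ℤ) : (Chebyshev.T ℝ n).eval 1 = 1 := by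
  have h := Polynomial.Chebyshev.T_real_cos 0 n
  simpa using h

lemma t_pos (n : ℕ) : ∀ j, j ≤ n → 0 < (derivative^[j] (Chebyshev.T ℝ (n:ℤ))).eval 1 := by
  intro j
  induction j with
  | zero => intro _; simp [T_eval_one]
  | succ j ih =>
    intro hj
    have h := t_rec (n:ℤ) j
    have hpos : (0:ℝ) < (n:ℝ)^2 - (j:ℝ)^2 := by
      have h1 : (j:ℝ) < (n:ℝ) := by exact_mod_cast (by omega : j < n)
      have h2 : (0:ℝ) ≤ (j:ℝ) := by positivity
      nlinarith
    have h2 : (0:ℝ) < 2*(j:ℝ)+1 := by positivity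
    have := ih (by omega)
    push_cast at h
    nlinarith

lemma t_prod (n k : ℕ) (hkn : k ≤ n) : ∀ m, m ≤ n - k →
    (derivative^[k+m] (Chebyshev.T ℝ (n:ℤ))).eval 1 * (2^m * (ascPochhammer ℝ m).eval ((k:ℝ)+1/2))
    = (derivative^[k] (Chebyshev.T ℝ (n:ℤ))).eval 1 * ((n-k).descFactorial m : ℝ) *
      (ascPochhammer ℝ m).eval ((n:ℝ)+(k:ℝ)) := by
  intro m
  induction m with
  | zero => intro _; simp [ascPochhammer_zero]
  | succ m ih =>
    intro hm
    have IH := ih (by omega)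
    have h := t_rec (n:ℤ) (k+m)
    rw [show k + (m+1) = (k+m)+1 by ring]
    have hdesc : ((n-k).descFactorial (m+1) : ℝ) = ((n-k-m : ℕ):ℝ) * ((n-k).descFactorial m : ℝ) := by
      rw [Nat.descFactorial_succ]; push_cast; ring
    have hsub : ((n-k-m : ℕ):ℝ) = (n:ℝ) - (k:ℝ) - (m:ℝ) := by
      have : k + m ≤ n := by omega
      rw [Nat.cast_sub (by omega : m ≤ n - k), Nat.cast_sub hkn]
    rw [hdesc, hsub]
    rw [ascPochhammer_succ_eval, ascPochhammer_succ_eval]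
    push_cast at h
    linear_combination (2^m * eval ((k:ℝ)+1/2) (ascPochhammer ℝ m)) * h
      + ((n:ℝ)^2 - ((k:ℝ)+(m:ℝ))^2) * IH

lemma taylor_expand (n k : ℕ) (hkn : k ≤ n) (x : ℝ) :
    (derivative^[k] (Chebyshev.T ℝ (n:ℤ))).eval x =
      ∑ m ∈ Finset.range (n-k+1),
        (derivative^[k+m] (Chebyshev.T ℝ (n:ℤ))).eval 1 / (m.factorial : ℝ) * (x-1)^m := by
  set p := derivative^[k] (Chebyshev.T ℝ (n:ℤ)) with hp
  have hdeg : p.natDegree ≤ n - k := by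
    have h1 := natDegree_iterate_derivative (Chebyshev.T ℝ (n:ℤ)) k
    rw [(T_deg_coeff n).1] at h1
    exact h1
  have h2 : (taylor 1 p).natDegree < n - k + 1 := by
    rw [natDegree_taylor]; omega
  calc p.eval x = (taylor 1 p).eval (x - 1) := (taylor_eval_sub 1 p x).symm
    _ = ∑ m ∈ Finset.range (n-k+1), (taylor 1 p).coeff m * (x-1)^m :=
        eval_eq_sum_range' h2 _
    _ = _ := by
        refine Finset.sum_congr rfl fun m _ => ?_
        rw [taylor_coeff]
        have hf := congrFun (factorial_smul_hasseDeriv (R := ℝ) m) p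
        simp only [LinearMap.smul_apply] at hf
        have : derivative^[k+m] (Chebyshev.T ℝ (n:ℤ)) = derivative^[m] p := by
          rw [hp, ← Function.iterate_add_apply, add_comm]
        rw [this, ← hf, nsmul_eq_mul, eval_mul]
        have hm : ((m.factorial : ℝ[X])).eval 1 = (m.factorial : ℝ) := by simp
        rw [eval_natCast]
        field_simp

lemma rolle_step (p : ℝ[X]) {d : ℕ} (f : Fin (d+1) → ℝ) (hf : StrictMono f)
    (hr : ∀ i, p.eval (f i) = 0) :
    ∃ g : Fin d → ℝ, StrictMono g ∧ (∀ i, (derivative p).eval (g i) = 0) ∧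
      ∀ i : Fin d, f i.castSucc < g i ∧ g i < f i.succ := by
  have key : ∀ i : Fin d, ∃ c ∈ Set.Ioo (f i.castSucc) (f i.succ), (derivative p).eval c = 0 := by
    intro i
    have hab : f i.castSucc < f i.succ := hf (by simp [Fin.lt_def])
    have := exists_hasDerivAt_eq_zero hab (p.continuousOn_aeval.congr (by
      intro x _; simp)) (by rw [hr, hr]) (fun x _ => p.hasDerivAt x)
    simpa using this
  choose g hg1 hg2 using key
  refine ⟨g, ?_, hg2, fun i => ⟨(hg1 i).1, (hg1 i).2⟩⟩
  intro i j hij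
  calc g i < f i.succ := (hg1 i).2
    _ ≤ f j.castSucc := hf.monotone (by
        simp only [Fin.le_def, Fin.coe_castSucc, Fin.val_succ]
        exact hij)
    _ < g j := (hg1 j).1

lemma T_roots (n : ℕ) (hn : 0 < n) :
    ∃ f : Fin n → ℝ, StrictMono f ∧ ∀ i, (Chebyshev.T ℝ (n:ℤ)).eval (f i) = 0 := by
  refine ⟨fun i => Real.cos ((2*((n - 1 - (i:ℕ) : ℕ):ℝ) + 1) * Real.pi / (2*n)), ?_, ?_⟩
  · intro i j hij
    have hθ : ∀ m : ℕ, m < n → (2*(m:ℝ)+1) * Real.pi / (2*n) ∈ Set.Icc 0 Real.pi := by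
      intro m hm
      constructor
      · positivity
      · rw [div_le_iff₀ (by positivity)]
        have : (2*(m:ℝ)+1) ≤ 2*n := by
          have : (m:ℝ) ≤ (n:ℝ) - 1 := by
            have : (m:ℝ) + 1 ≤ (n:ℝ) := by exact_mod_cast hm
            linarith
          linarith
        nlinarith [Real.pi_pos]
    have h1 : n - 1 - (j:ℕ) < n - 1 - (i:ℕ) ∨ (n - 1 - (j:ℕ) < n ∧ n - 1 - (i:ℕ) < n) := by
      left; omega
    have hji : n - 1 - (j:ℕ) < n - 1 - (i:ℕ) := by have := j.2; have := i.2; omega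
    have hjmem := hθ (n - 1 - (j:ℕ)) (by omega)
    have himem := hθ (n - 1 - (i:ℕ)) (by omega)
    have hcast : ((n - 1 - (j:ℕ) : ℕ):ℝ) < ((n - 1 - (i:ℕ) : ℕ):ℝ) := by exact_mod_cast hji
    have hpi := Real.pi_pos
    refine Real.strictAntiOn_cos hjmem himem ?_
    gcongr
    all_goals first | exact Real.pi_pos.le | linarith
  · intro i
    rw [Polynomial.Chebyshev.T_real_cos]
    have hcast : ((n:ℤ):ℝ) = (n:ℝ) := by push_cast; ring
    rw [hcast]
    have : (n:ℝ) * ((2*((n - 1 - (i:ℕ) : ℕ):ℝ) + 1) * Real.pi / (2*n)) =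
        ((n - 1 - (i:ℕ) : ℕ):ℝ) * Real.pi + Real.pi/2 := by
      field_simp
    rw [this, Real.cos_add_pi_div_two, Real.sin_nat_mul_pi]
    norm_num

lemma dT_roots (n : ℕ) (hn : 0 < n) : ∀ j, j ≤ n →
    ∃ f : Fin (n - j) → ℝ, StrictMono f ∧
      ∀ i, (derivative^[j] (Chebyshev.T ℝ (n:ℤ))).eval (f i) = 0 := by
  intro j
  induction j with
  | zero => intro _; simpa using T_roots n hn
  | succ j ih =>
    intro hj
    obtain ⟨f, hf, hroots⟩ := ih (by omega)
    have hd : n - (j+1) + 1 = n - j := by omega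
    let f' : Fin (n - (j+1) + 1) → ℝ := f ∘ (Fin.castOrderIso hd)
    have hf' : StrictMono f' := hf.comp (Fin.castOrderIso hd).strictMono
    obtain ⟨g, hg, hgroots, _⟩ := rolle_step _ f' hf' (fun i => hroots _)
    refine ⟨g, hg, fun i => ?_⟩
    rw [Function.iterate_succ_apply']
    exact hgroots i

lemma root_above (n k : ℕ) (hk : 1 ≤ k) (hn : k + 1 < n) (ω : ℝ)
    (hωroot : (derivative^[k + 1] (Chebyshev.T ℝ (n : ℤ))).eval ω = 0) :
    ∃ r : ℝ, (derivative^[k] (Chebyshev.T ℝ (n : ℤ))).eval r = 0 ∧ ω < r := by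
  obtain ⟨f, hf, hroots⟩ := dT_roots n (by omega) k (by omega)
  have hd : n - (k+1) + 1 = n - k := by omega
  let f' : Fin (n - (k+1) + 1) → ℝ := f ∘ (Fin.castOrderIso hd)
  have hf' : StrictMono f' := hf.comp (Fin.castOrderIso hd).strictMono
  obtain ⟨g, hg, hgroots, hbetween⟩ := rolle_step _ f' hf' (fun i => hroots _)
  obtain ⟨hqdeg, hqcoeff⟩ := dT_deg_coeff n (k+1) (by omega)
  have hqne : derivative^[k+1] (Chebyshev.T ℝ (n:ℤ)) ≠ 0 := by
    intro h
    rw [h] at hqcoeff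
    simp at hqcoeff
  have hginj : Function.Injective g := hg.injective
  have hsub : Finset.image g Finset.univ ⊆ (derivative^[k+1] (Chebyshev.T ℝ (n:ℤ))).roots.toFinset := by
    intro x hx
    simp only [Finset.mem_image] at hx
    obtain ⟨i, _, rfl⟩ := hx
    rw [Multiset.mem_toFinset, mem_roots hqne, Function.iterate_succ_apply']
    exact hgroots i
  have hcard : (Finset.image g Finset.univ).card = n - (k+1) := by
    rw [Finset.card_image_of_injective _ hginj, Finset.card_univ, Fintype.card_fin]
  have hcard2 : (derivative^[k+1] (Chebyshev.T ℝ (n:ℤ))).roots.toFinset.card ≤ n - (k+1) := by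
    refine (Multiset.toFinset_card_le _).trans ?_
    have h1 := (derivative^[k+1] (Chebyshev.T ℝ (n:ℤ))).card_roots'
    omega
  have heq := Finset.eq_of_subset_of_card_le hsub (by omega)
  have hωmem : ω ∈ (derivative^[k+1] (Chebyshev.T ℝ (n:ℤ))).roots.toFinset := by
    rw [Multiset.mem_toFinset, mem_roots hqne]
    exact hωroot
  rw [← heq] at hωmem
  simp only [Finset.mem_image] at hωmem
  obtain ⟨i, _, hgi⟩ := hωmem
  refine ⟨f' (Fin.last _), hroots _, ?_⟩
  rw [← hgi]
  calc g i < f' i.succ := (hbetween i).2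
    _ ≤ f' (Fin.last _) := hf'.monotone (Fin.le_last _)

lemma p_at_omega_neg (n k : ℕ) (hk : 1 ≤ k) (hn : k + 1 < n) (ω : ℝ)
    (hωroot : (derivative^[k + 1] (Chebyshev.T ℝ (n : ℤ))).eval ω = 0)
    (hωmax : ∀ x : ℝ, (derivative^[k + 1] (Chebyshev.T ℝ (n : ℤ))).eval x = 0 → x ≤ ω) :
    (derivative^[k] (Chebyshev.T ℝ (n : ℤ))).eval ω < 0 := by
  obtain ⟨hqdeg, hqcoeff⟩ := dT_deg_coeff n (k+1) (by omega)
  set q := derivative^[k+1] (Chebyshev.T ℝ (n:ℤ)) with hq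
  have hlc : 0 < q.leadingCoeff := by rwa [leadingCoeff, hqdeg]
  have hdeg : 0 < q.degree := by
    rw [← natDegree_pos_iff_degree_pos, hqdeg]; omega
  have htends : Filter.Tendsto (fun x => q.eval x) Filter.atTop Filter.atTop :=
    q.tendsto_atTop_of_leadingCoeff_nonneg hdeg hlc.le
  have hqpos : ∀ x, ω < x → 0 < q.eval x := by
    intro x hx
    by_contra hneg
    push_neg at hneg
    have hxne : q.eval x ≠ 0 := fun h => absurd (hωmax x h) (not_le.mpr hx)
    have hlt : q.eval x < 0 := lt_of_le_of_ne hneg hxne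
    obtain ⟨M, hM1, hM2⟩ := ((htends.eventually_ge_atTop 1).and (Filter.eventually_gt_atTop x)).exists
    have hcont : ContinuousOn (fun y => q.eval y) (Set.Icc x M) := by
      exact (q.continuous_aeval.congr (fun y => by simp)).continuousOn
    obtain ⟨c, hc, hc0⟩ := intermediate_value_Ioo hM2.le hcont
      (show (0:ℝ) ∈ Set.Ioo (q.eval x) (q.eval M) from ⟨hlt, by linarith⟩)
    exact absurd (hωmax c hc0) (not_le.mpr (hx.trans hc.1))
  have hmono : StrictMonoOn (fun x => (derivative^[k] (Chebyshev.T ℝ (n:ℤ))).eval x) (Set.Ici ω) := by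
    refine strictMonoOn_of_deriv_pos (convex_Ici ω) ?_ ?_
    · exact ((derivative^[k] (Chebyshev.T ℝ (n:ℤ))).continuous_aeval.congr (fun y => by simp)).continuousOn
    · intro x hx
      rw [interior_Ici] at hx
      rw [Polynomial.deriv]
      have : derivative ((derivative^[k]) (Chebyshev.T ℝ (n:ℤ))) = q := by
        rw [hq, Function.iterate_succ_apply']
      rw [this]
      exact hqpos x hx
  obtain ⟨r, hr, hωr⟩ := root_above n k hk hn ω hωroot
  have := hmono (Set.self_mem_Ici) (Set.mem_Ici.mpr hωr.le) hωr
  simpa [hr] using this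

theorem stmt14 (n k : ℕ) (hk : 1 ≤ k) (hn : k + 1 < n) (ω : ℝ)
    (hωroot : (derivative^[k + 1] (Chebyshev.T ℝ (n : ℤ))).eval ω = 0)
    (hωmax : ∀ x : ℝ, (derivative^[k + 1] (Chebyshev.T ℝ (n : ℤ))).eval x = 0 → x ≤ ω) :
    |(derivative^[k] (Chebyshev.T ℝ (n : ℤ))).eval ω| /
        (derivative^[k] (Chebyshev.T ℝ (n : ℤ))).eval 1 =
      -1 + ∑ m ∈ Finset.Icc 1 (n - k), (-1 : ℝ) ^ (m + 1) * (Nat.choose (n - k) m : ℝ) *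
        ((ascPochhammer ℝ m).eval ((n : ℝ) + (k : ℝ)) /
          (ascPochhammer ℝ m).eval ((k : ℝ) + 1 / 2)) *
        ((1 - ω) / 2) ^ m := by
  have hpneg := p_at_omega_neg n k hk hn ω hωroot hωmax
  have hp1 : 0 < (derivative^[k] (Chebyshev.T ℝ (n:ℤ))).eval 1 := t_pos n k (by omega)
  rw [abs_of_neg hpneg, div_eq_iff hp1.ne']
  have htaylor := taylor_expand n k (by omega) ω
  have hins : Finset.range (n - k + 1) = insert 0 (Finset.Icc 1 (n-k)) := by
    ext m; simp; omega
  rw [hins, Finset.sum_insert (by simp)] at htaylor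
  simp only [Nat.add_zero, Nat.factorial_zero, pow_zero, Nat.cast_one, div_one, mul_one] at htaylor
  rw [htaylor]
  rw [add_mul, Finset.sum_mul, neg_add, ← Finset.sum_neg_distrib]
  rw [neg_one_mul]
  congr 1
  refine Finset.sum_congr rfl fun m hm => ?_
  simp only [Finset.mem_Icc] at hm
  have hprod := t_prod n k (by omega) m hm.2
  have hPpos : 0 < (ascPochhammer ℝ m).eval ((k:ℝ) + 1/2) :=
    ascPochhammer_pos m _ (by positivity)
  have hfac : (0:ℝ) < (m.factorial : ℝ) := by exact_mod_cast m.factorial_pos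
  have hdesc : (((n-k).descFactorial m : ℕ) : ℝ) = (m.factorial : ℝ) * ((n-k).choose m : ℝ) := by
    rw [Nat.descFactorial_eq_factorial_mul_choose]; push_cast; ring
  rw [hdesc] at hprod
  have hsign : ((-1:ℝ))^(m+1) * (-1)^m = -1 := by
    rw [← pow_add]
    exact Odd.neg_one_pow ⟨m, by ring⟩
  have hω : (ω - 1)^m = (-1)^m * (1-ω)^m := by
    rw [← mul_pow]
    congr 1
    ring
  have h2 : ((1-ω)/2)^m = (1-ω)^m / 2^m := div_pow _ _ _
  rw [h2, hω]
  set A := (derivative^[k+m] (Chebyshev.T ℝ (n:ℤ))).eval 1 with hA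
  set B := (derivative^[k] (Chebyshev.T ℝ (n:ℤ))).eval 1 with hB
  set P := (ascPochhammer ℝ m).eval ((k:ℝ) + 1/2) with hP
  set Q := (ascPochhammer ℝ m).eval ((n:ℝ) + (k:ℝ)) with hQ
  have ht : ((-1:ℝ))^m * (-1)^m = 1 := by
    rw [← mul_pow]; norm_num
  field_simp
  linear_combination (-((-1:ℝ))^m) * (1-ω)^m * hprod
end
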